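/- Both sides of Stanley's formula, viewed as polynomial functions F(p,q) in p_1,...,p_m, q_1,...,q_m, satisfy the functional equation F(p,q)|_{q_i = q_{i+1}} = F(p_1,...,p_i + p_{i+1},...,p_m, q_1,...,q_i, q_{i+2},...,q_m); in particular the right-hand side R_m(p,q) = (-1)^k Σ_{(σ,φ)∈S(k)^{(m)}} ∏_{b∈C(σ)} p_{φ(b)} ∏_{c∈C(σμ)} (−q_{ψ(c)}) satisfies R_m(p,q)|_{q_i=q_{i+1}} = R_{m-1}(p_1,...,p_i+p_{i+1},...,p_m, q_1,...,q_i,q_{i+2},...,q_m). -/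

import Mathlib

open scoped Classical

/-- `μ'` is obtained from the partition `μ` of `k+1` by removing one (corner) box:
some part `p` of `μ` is replaced by `p - 1` (deleted if `p = 1`). -/
def IsCover {k : ℕ} (μ' : Nat.Partition k) (μ : Nat.Partition (k + 1)) : Prop :=
  ∃ p ∈ μ.parts, μ'.parts = Multiset.filter (fun x => 0 < x) ((p - 1) ::ₘ μ.parts.erase p)

/-- The canonical embedding of `S(k)` into `S(n)` for `k ≤ n`, acting on the first `k`
points and fixing the others. -/
noncomputable def embPerm {k n : ℕ} (h : k ≤ n) :
    Equiv.Perm (Fin k) →* Equiv.Perm (Fin n) :=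
  Equiv.Perm.viaEmbeddingHom (Fin.castLEEmb h)

/-- A family `W k λ` (for `λ ⊢ k`) realizing the canonical indexing of the irreducible
(complex) representations of the symmetric groups by partitions: the `W k λ` are
irreducible, pairwise non-isomorphic, they satisfy the branching rule (stated as a
character identity along the standard embedding `S(k) ⊆ S(k+1)`), the one-row partition
carries the trivial representation and the one-column partition the sign representation. -/
structure SymmIrrepFamily : Type 1 where
  W : ∀ k : ℕ, Nat.Partition k → FDRep ℂ (Equiv.Perm (Fin k))
  simple : ∀ (k : ℕ) (l : Nat.Partition k), CategoryTheory.Simple (W k l)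
  non_iso : ∀ (k : ℕ) (l₁ l₂ : Nat.Partition k), l₁ ≠ l₂ → IsEmpty (W k l₁ ≅ W k l₂)
  branching : ∀ (k : ℕ) (l : Nat.Partition (k + 1)) (σ : Equiv.Perm (Fin k)),
    (W (k + 1) l).character (embPerm (Nat.le_succ k) σ)
      = ∑ l' : Nat.Partition k, if IsCover l' l then (W k l').character σ else 0
  row_trivial : ∀ (k : ℕ) (l : Nat.Partition k), l.parts = Multiset.replicate 1 k →
    ∀ σ, (W k l).character σ = 1
  complete : ∀ (k : ℕ) (V : FDRep ℂ (Equiv.Perm (Fin k))), CategoryTheory.Simple V →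
    ∃ l : Nat.Partition k, Nonempty (V ≅ W k l)
  col_sign : ∀ (k : ℕ) (l : Nat.Partition k), l.parts = Multiset.replicate k 1 →
    ∀ σ, (W k l).character σ = ((Equiv.Perm.sign σ : ℤ) : ℂ)

/-- The normalised character `χ̂_ν(μ) = n(n-1)⋯(n-k+1) χ_ν(μ)/χ_ν(id)` for `μ ∈ S(k)`,
`ν ⊢ n`, `k ≤ n`. -/
noncomputable def normChar (F : SymmIrrepFamily) {k n : ℕ} (h : k ≤ n)
    (ν : Nat.Partition n) (μ : Equiv.Perm (Fin k)) : ℂ :=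
  (n.descFactorial k : ℂ) * (F.W n ν).character (embPerm h μ) / (F.W n ν).character 1

open Equiv Equiv.Perm

/-- The set of cycles (orbits, including fixed points) of a permutation of `Fin k`,
as the quotient of `Fin k` by the `SameCycle` relation. -/
def PermCycles {k : ℕ} (σ : Equiv.Perm (Fin k)) : Type :=
  Quotient (Equiv.Perm.SameCycle.setoid σ)

instance {k : ℕ} (σ : Equiv.Perm (Fin k)) : DecidableEq (PermCycles σ) :=
  @Quotient.decidableEq _ (Equiv.Perm.SameCycle.setoid σ)
    (fun x y => (inferInstance : Decidable (σ.SameCycle x y)))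

instance {k : ℕ} (σ : Equiv.Perm (Fin k)) : Fintype (PermCycles σ) :=
  Fintype.ofSurjective (fun a => Quotient.mk (Equiv.Perm.SameCycle.setoid σ) a)
    (fun c => c.exists_rep)

/-- The cycle of `σ` containing `a`. -/
def cycleMk {k : ℕ} (σ : Equiv.Perm (Fin k)) (a : Fin k) : PermCycles σ :=
  Quotient.mk (Equiv.Perm.SameCycle.setoid σ) a

/-- The elements of a cycle `c` of `σ`, as a `Finset`. -/
def cycleElems {k : ℕ} (σ : Equiv.Perm (Fin k)) (c : PermCycles σ) : Finset (Fin k) :=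
  Finset.univ.filter (fun a => cycleMk σ a = c)

lemma cycleElems_nonempty {k : ℕ} (σ : Equiv.Perm (Fin k)) (c : PermCycles σ) :
    (cycleElems σ c).Nonempty := by
  obtain ⟨a, ha⟩ := c.exists_rep
  exact ⟨a, Finset.mem_filter.mpr ⟨Finset.mem_univ _, ha⟩⟩

/-- The minimal element of a cycle of `σ`. -/
def cycMin {k : ℕ} (σ : Equiv.Perm (Fin k)) (c : PermCycles σ) : Fin k :=
  (cycleElems σ c).min' (cycleElems_nonempty σ c)

/-- The number of cycles (orbits, including fixed points) of `σ`. -/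
def cycleCount {k : ℕ} (σ : Equiv.Perm (Fin k)) : ℕ :=
  Fintype.card (PermCycles σ)

/-- The maximum of `φ` over the cycle `c`. -/
def cycMaxVal {k m : ℕ} (σ : Equiv.Perm (Fin k)) (φ : Fin k → Fin m) (c : PermCycles σ) :
    Fin m :=
  ((cycleElems σ c).image φ).max' ((cycleElems_nonempty σ c).image φ)

/-- The right-hand side of Stanley's formula, as a (polynomial) function of
`p_1,…,p_m, q_1,…,q_m`. -/
noncomputable def stanleyRHS {k : ℕ} (μ : Equiv.Perm (Fin k)) (m : ℕ)
    (p q : Fin m → ℂ) : ℂ :=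
  (-1 : ℂ) ^ k * ∑ σ : Equiv.Perm (Fin k),
    ∑ φ ∈ Finset.univ.filter (fun φ : Fin k → Fin m => φ ∘ ⇑σ = φ),
      (∏ b : PermCycles σ, p (φ (cycMin σ b))) *
        ∏ c : PermCycles (σ * μ), (-(q (cycMaxVal (σ * μ) φ c)))

/-- Merging `p_i` and `p_{i+1}` into `p_i + p_{i+1}`. -/
def mergeP {α : Type*} [Add α] {m : ℕ} (i : Fin m) (p : Fin (m + 1) → α) : Fin m → α :=
  fun j => if (j : ℕ) < (i : ℕ) then p j.castSucc
    else if j = i then p i.castSucc + p i.succ else p j.succ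

/-- Deleting `q_{i+1}` from the list `q_1,…,q_{m+1}`. -/
def mergeQ {α : Type*} {m : ℕ} (i : Fin m) (q : Fin (m + 1) → α) : Fin m → α :=
  fun j => if (j : ℕ) ≤ (i : ℕ) then q j.castSucc else q j.succ

namespace StanleyAux

/-- The colour-merging map `Fin (m+1) → Fin m` sending both `i` and `i+1` to `i`. -/
def fmerge {m : ℕ} (i : Fin m) (j : Fin (m + 1)) : Fin m :=
  if h : (j : ℕ) ≤ (i : ℕ) then ⟨j, lt_of_le_of_lt h i.isLt⟩
  else ⟨(j : ℕ) - 1, by have := j.isLt; omega⟩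

lemma fmerge_mono {m : ℕ} (i : Fin m) : Monotone (fmerge i) := by
  intro a b hab
  rw [Fin.le_def] at hab
  unfold fmerge
  split_ifs <;> rw [Fin.mk_le_mk] <;> omega

lemma fmerge_eq_iff {m : ℕ} (i j : Fin m) (x : Fin (m + 1)) :
    fmerge i x = j ↔ ((x : ℕ) ≤ i ∧ (x : ℕ) = j) ∨ ((i : ℕ) < x ∧ (x : ℕ) = (j : ℕ) + 1) := by
  unfold fmerge
  split_ifs with h <;> simp [Fin.ext_iff] <;> omega

lemma mergeQ_fmerge {m : ℕ} {α : Type*} (i : Fin m) (q : Fin (m + 1) → α)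
    (hq : q i.succ = q i.castSucc) (j : Fin (m + 1)) :
    mergeQ i q (fmerge i j) = q j := by
  unfold mergeQ
  rcases le_or_gt (j : ℕ) (i : ℕ) with h | h
  · have h1 : fmerge i j = ⟨j, lt_of_le_of_lt h i.isLt⟩ := dif_pos h
    rw [h1, if_pos h]
    congr 1
  · have h1 : fmerge i j = ⟨(j : ℕ) - 1, by have := j.isLt; omega⟩ := dif_neg (not_le.mpr h)
    rw [h1]
    by_cases h2 : (j : ℕ) - 1 ≤ (i : ℕ)
    · rw [if_pos h2]
      have hj : j = i.succ := by
        ext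
        simp only [Fin.val_succ]
        omega
      have hc : (⟨(j : ℕ) - 1, by have := j.isLt; omega⟩ : Fin m).castSucc = i.castSucc := by
        ext
        simp only [Fin.coe_castSucc]
        omega
      rw [hc, ← hq, hj]
    · rw [if_neg h2]
      congr 1
      ext
      simp only [Fin.val_succ]
      omega

lemma sum_fiber_fmerge {m : ℕ} (i : Fin m) (p : Fin (m + 1) → ℂ) (j : Fin m) :
    ∑ x ∈ Finset.univ.filter (fun x => fmerge i x = j), p x = mergeP i p j := by
  rcases lt_trichotomy (j : ℕ) (i : ℕ) with h | h | h
  · have hf : Finset.univ.filter (fun x => fmerge i x = j) = {j.castSucc} := by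
      ext x
      simp only [Finset.mem_filter, Finset.mem_univ, true_and, fmerge_eq_iff,
        Finset.mem_singleton]
      simp only [Fin.ext_iff, Fin.coe_castSucc]
      omega
    rw [hf, Finset.sum_singleton, mergeP, if_pos h]
  · have hj : j = i := Fin.ext h
    subst hj
    have hf : Finset.univ.filter (fun x => fmerge j x = j) = {j.castSucc, j.succ} := by
      ext x
      simp only [Finset.mem_filter, Finset.mem_univ, true_and, fmerge_eq_iff,
        Finset.mem_insert, Finset.mem_singleton]
      simp only [Fin.ext_iff, Fin.coe_castSucc, Fin.val_succ]
      omega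
    rw [hf, Finset.sum_pair (by simp [Fin.ext_iff])]
    simp [mergeP]
  · have hf : Finset.univ.filter (fun x => fmerge i x = j) = {j.succ} := by
      ext x
      simp only [Finset.mem_filter, Finset.mem_univ, true_and, fmerge_eq_iff,
        Finset.mem_singleton]
      simp only [Fin.ext_iff, Fin.val_succ]
      omega
    rw [hf, Finset.sum_singleton, mergeP, if_neg (by omega),
      if_neg (by intro hji; rw [Fin.ext_iff] at hji; omega)]

lemma cycleMk_eq_iff {k : ℕ} (σ : Equiv.Perm (Fin k)) (a b : Fin k) :
    cycleMk σ a = cycleMk σ b ↔ σ.SameCycle a b :=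
  ⟨fun h => Quotient.exact h, fun h => Quotient.sound h⟩

lemma cycleMk_apply {k : ℕ} (σ : Equiv.Perm (Fin k)) (a : Fin k) :
    cycleMk σ (σ a) = cycleMk σ a :=
  Quotient.sound ⟨-1, by simp⟩

lemma cycleMk_cycMin {k : ℕ} (σ : Equiv.Perm (Fin k)) (c : PermCycles σ) :
    cycleMk σ (cycMin σ c) = c := by
  have h := Finset.min'_mem (cycleElems σ c) (cycleElems_nonempty σ c)
  simp only [cycleElems, Finset.mem_filter, Finset.mem_univ, true_and] at h
  exact h

lemma inv_pow_apply {k m' : ℕ} {σ : Equiv.Perm (Fin k)} {φ : Fin k → Fin m'}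
    (hφ : φ ∘ ⇑σ = φ) : ∀ (n : ℕ) (a : Fin k), φ ((σ ^ n) a) = φ a := by
  intro n
  induction n with
  | zero => intro a; simp
  | succ n ih =>
    intro a
    rw [pow_succ, Equiv.Perm.mul_apply, ih (σ a)]
    exact congrFun hφ a

lemma inv_const {k m' : ℕ} {σ : Equiv.Perm (Fin k)} {φ : Fin k → Fin m'}
    (hφ : φ ∘ ⇑σ = φ) {a b : Fin k} (h : cycleMk σ a = cycleMk σ b) : φ a = φ b := by
  rw [cycleMk_eq_iff] at h
  obtain ⟨n, -, hn⟩ := h.exists_pow_eq'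
  rw [← hn, inv_pow_apply hφ]

lemma sum_invariant {k m' : ℕ} (σ : Equiv.Perm (Fin k)) (F : (Fin k → Fin m') → ℂ) :
    ∑ φ ∈ Finset.univ.filter (fun φ : Fin k → Fin m' => φ ∘ ⇑σ = φ), F φ
      = ∑ g : PermCycles σ → Fin m', F (g ∘ cycleMk σ) := by
  refine Finset.sum_nbij' (fun φ => fun c => φ (cycMin σ c)) (fun g => g ∘ cycleMk σ)
    (fun _ _ => Finset.mem_univ _) ?_ ?_ ?_ ?_
  · intro g _
    simp only [Finset.mem_filter, Finset.mem_univ, true_and]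
    funext a
    exact congrArg g (cycleMk_apply σ a)
  · intro φ hφ
    simp only [Finset.mem_filter, Finset.mem_univ, true_and] at hφ
    funext a
    exact inv_const hφ (cycleMk_cycMin σ (cycleMk σ a))
  · intro g _
    funext c
    exact congrArg g (cycleMk_cycMin σ c)
  · intro φ hφ
    simp only [Finset.mem_filter, Finset.mem_univ, true_and] at hφ
    congr 1
    funext a
    exact (inv_const hφ (cycleMk_cycMin σ (cycleMk σ a))).symm

lemma cycMaxVal_fmerge {k m : ℕ} (τ : Equiv.Perm (Fin k)) (i : Fin m)
    (φ : Fin k → Fin (m + 1)) (c : PermCycles τ) :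
    cycMaxVal τ (fmerge i ∘ φ) c = fmerge i (cycMaxVal τ φ c) := by
  unfold cycMaxVal
  apply le_antisymm
  · apply Finset.max'_le
    intro y hy
    simp only [Finset.mem_image, Function.comp_apply] at hy
    obtain ⟨a, ha, rfl⟩ := hy
    exact fmerge_mono i (Finset.le_max' _ _ (Finset.mem_image_of_mem φ ha))
  · apply Finset.le_max'
    have hm := Finset.max'_mem ((cycleElems τ c).image φ) ((cycleElems_nonempty τ c).image φ)
    simp only [Finset.mem_image] at hm ⊢
    obtain ⟨a, ha, hae⟩ := hm
    exact ⟨a, ha, by rw [Function.comp_apply, hae]⟩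

lemma inner_sum {k m : ℕ} (i : Fin m) (p q : Fin (m + 1) → ℂ)
    (hq : q i.succ = q i.castSucc) (σ τ : Equiv.Perm (Fin k)) :
    ∑ g : PermCycles σ → Fin (m + 1), (∏ b : PermCycles σ, p (g b)) *
        ∏ c : PermCycles τ, (-(q (cycMaxVal τ (g ∘ cycleMk σ) c)))
    = ∑ g : PermCycles σ → Fin m, (∏ b : PermCycles σ, mergeP i p (g b)) *
        ∏ c : PermCycles τ, (-(mergeQ i q (cycMaxVal τ (g ∘ cycleMk σ) c))) := by
  rw [← Finset.sum_fiberwise Finset.univ (fun g : PermCycles σ → Fin (m + 1) => fmerge i ∘ g)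
    (fun g => (∏ b : PermCycles σ, p (g b)) *
      ∏ c : PermCycles τ, (-(q (cycMaxVal τ (g ∘ cycleMk σ) c))))]
  apply Finset.sum_congr rfl
  intro g' _
  have hfib : Finset.univ.filter (fun g : PermCycles σ → Fin (m + 1) => fmerge i ∘ g = g')
      = Fintype.piFinset (fun b => Finset.univ.filter (fun x => fmerge i x = g' b)) := by
    ext g
    simp [funext_iff]
  have hP : ∑ g ∈ Finset.univ.filter
        (fun g : PermCycles σ → Fin (m + 1) => fmerge i ∘ g = g'),
      ∏ b : PermCycles σ, p (g b) = ∏ b : PermCycles σ, mergeP i p (g' b) := by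
    rw [hfib, ← Finset.prod_univ_sum]
    exact Finset.prod_congr rfl (fun b _ => sum_fiber_fmerge i p (g' b))
  calc
    ∑ g ∈ Finset.univ.filter
        (fun g : PermCycles σ → Fin (m + 1) => fmerge i ∘ g = g'),
        (∏ b : PermCycles σ, p (g b)) *
          ∏ c : PermCycles τ, (-(q (cycMaxVal τ (g ∘ cycleMk σ) c)))
      = ∑ g ∈ Finset.univ.filter
          (fun g : PermCycles σ → Fin (m + 1) => fmerge i ∘ g = g'),
          (∏ b : PermCycles σ, p (g b)) *
            ∏ c : PermCycles τ, (-(mergeQ i q (cycMaxVal τ (g' ∘ cycleMk σ) c))) := by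
        apply Finset.sum_congr rfl
        intro g hg
        simp only [Finset.mem_filter, Finset.mem_univ, true_and] at hg
        congr 1
        apply Finset.prod_congr rfl
        intro c _
        have hcomp : g' ∘ cycleMk σ = fmerge i ∘ (g ∘ cycleMk σ) := by
          rw [← hg]; rfl
        rw [hcomp, cycMaxVal_fmerge, mergeQ_fmerge i q hq]
    _ = (∏ b : PermCycles σ, mergeP i p (g' b)) *
          ∏ c : PermCycles τ, (-(mergeQ i q (cycMaxVal τ (g' ∘ cycleMk σ) c))) := by
        rw [← Finset.sum_mul, hP]

lemma multiset_merge {m : ℕ} (i : Fin m) (p q : Fin (m + 1) → ℕ)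
    (hqi : q i.succ = q i.castSucc) :
    (∑ a : Fin (m + 1), Multiset.replicate (p a) (q a))
      = ∑ a : Fin m, Multiset.replicate (mergeP i p a) (mergeQ i q a) := by
  have key : ∀ a : Fin m, Multiset.replicate (mergeP i p a) (mergeQ i q a)
      = Multiset.replicate (p (i.succ.succAbove a)) (q (i.succ.succAbove a))
        + (if a = i then Multiset.replicate (p i.succ) (q i.succ) else 0) := by
    intro a
    rcases lt_trichotomy (a : ℕ) (i : ℕ) with h | h | h
    · rw [if_neg (by intro hai; rw [Fin.ext_iff] at hai; omega)]
      rw [Fin.succAbove_of_castSucc_lt _ _ (by rw [Fin.lt_def]; simp; omega)]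
      simp only [mergeP, mergeQ]
      rw [if_pos h, if_pos h.le, add_zero]
    · have ha : a = i := Fin.ext h
      subst ha
      rw [if_pos rfl, Fin.succAbove_of_castSucc_lt _ _ (by rw [Fin.lt_def]; simp)]
      have h1 : mergeP a p a = p a.castSucc + p a.succ := by
        simp [mergeP]
      have h2 : mergeQ a q a = q a.castSucc := by
        simp [mergeQ]
      rw [h1, h2, Multiset.replicate_add, hqi]
    · rw [if_neg (by intro hai; rw [Fin.ext_iff] at hai; omega)]
      rw [Fin.succAbove_of_le_castSucc _ _ (by rw [Fin.le_def]; simp; omega)]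
      have h1 : mergeP i p a = p a.succ := by
        rw [mergeP, if_neg (by omega), if_neg (by intro hai; rw [Fin.ext_iff] at hai; omega)]
      have h2 : mergeQ i q a = q a.succ := by
        rw [mergeQ, if_neg (by omega)]
      rw [h1, h2]
      simp
  calc
    (∑ a : Fin (m + 1), Multiset.replicate (p a) (q a))
      = Multiset.replicate (p i.succ) (q i.succ)
        + ∑ a : Fin m, Multiset.replicate (p (i.succ.succAbove a)) (q (i.succ.succAbove a)) :=
      Fin.sum_univ_succAbove (fun a => Multiset.replicate (p a) (q a)) i.succ
    _ = ∑ a : Fin m, Multiset.replicate (mergeP i p a) (mergeQ i q a) := by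
      rw [Finset.sum_congr rfl (fun a _ => key a), Finset.sum_add_distrib,
        Finset.sum_ite_eq' Finset.univ i
          (fun _ => Multiset.replicate (p i.succ) (q i.succ))]
      simp [add_comm]

end StanleyAux

open StanleyAux

/-- **The functional equation.** Both sides of Stanley's formula satisfy
`F(p,q)|_{q_{i+1} = q_i} = F(p_1,…,p_i+p_{i+1},…,p_{m+1}, q_1,…,q_i,q_{i+2},…,q_{m+1})`:
the left-hand side (the normalised character) because the two partitions coincide, and
the right-hand side `R_m` as an identity of polynomial functions. -/
theorem stmt_17 (k m : ℕ) (hk : 0 < k) (μ : Equiv.Perm (Fin k)) (i : Fin m) :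
    (∀ (F : SymmIrrepFamily) (p q : Fin (m + 1) → ℕ), (∀ a, 0 < p a) → (∀ a, 0 < q a) →
      (∀ a b : Fin (m + 1), a ≤ b → q b ≤ q a) → q i.succ = q i.castSucc →
      ∀ (n n' : ℕ) (ν : Nat.Partition n) (ν' : Nat.Partition n')
        (hkn : k ≤ n) (hkn' : k ≤ n'),
        ν.parts = ∑ a : Fin (m + 1), Multiset.replicate (p a) (q a) →
        ν'.parts = ∑ a : Fin m, Multiset.replicate (mergeP i p a) (mergeQ i q a) →
        normChar F hkn ν μ = normChar F hkn' ν' μ) ∧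
    (∀ p q : Fin (m + 1) → ℂ, q i.succ = q i.castSucc →
      stanleyRHS μ (m + 1) p q = stanleyRHS μ m (mergeP i p) (mergeQ i q)) := by
  constructor
  · intro F p q _ _ _ hqi n n' ν ν' hkn hkn' hν hν'
    have hparts : ν.parts = ν'.parts := by
      rw [hν, hν', multiset_merge i p q hqi]
    have hn : n = n' := by
      rw [← ν.parts_sum, ← ν'.parts_sum, hparts]
    subst hn
    have hνν : ν = ν' := Nat.Partition.ext hparts
    subst hνν
    rfl
  · intro p q hq
    unfold stanleyRHS
    congr 1
    apply Finset.sum_congr rfl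
    intro σ _
    rw [sum_invariant σ (fun φ => (∏ b : PermCycles σ, p (φ (cycMin σ b))) *
          ∏ c : PermCycles (σ * μ), (-(q (cycMaxVal (σ * μ) φ c)))),
        sum_invariant σ (fun φ => (∏ b : PermCycles σ, mergeP i p (φ (cycMin σ b))) *
          ∏ c : PermCycles (σ * μ), (-(mergeQ i q (cycMaxVal (σ * μ) φ c))))]
    have hmin : ∀ (m' : ℕ) (g : PermCycles σ → Fin m') (b : PermCycles σ),
        (g ∘ cycleMk σ) (cycMin σ b) = g b :=
      fun _ g b => congrArg g (cycleMk_cycMin σ b)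
    calc
      ∑ g : PermCycles σ → Fin (m + 1),
          (∏ b : PermCycles σ, p ((g ∘ cycleMk σ) (cycMin σ b))) *
            ∏ c : PermCycles (σ * μ), (-(q (cycMaxVal (σ * μ) (g ∘ cycleMk σ) c)))
        = ∑ g : PermCycles σ → Fin (m + 1), (∏ b : PermCycles σ, p (g b)) *
            ∏ c : PermCycles (σ * μ), (-(q (cycMaxVal (σ * μ) (g ∘ cycleMk σ) c))) := by
          apply Finset.sum_congr rfl
          intro g _
          congr 1
          exact Finset.prod_congr rfl (fun b _ => by rw [hmin _ g b])
      _ = ∑ g : PermCycles σ → Fin m, (∏ b : PermCycles σ, mergeP i p (g b)) *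
            ∏ c : PermCycles (σ * μ), (-(mergeQ i q (cycMaxVal (σ * μ) (g ∘ cycleMk σ) c))) :=
          inner_sum i p q hq σ (σ * μ)
      _ = ∑ g : PermCycles σ → Fin m,
            (∏ b : PermCycles σ, mergeP i p ((g ∘ cycleMk σ) (cycMin σ b))) *
              ∏ c : PermCycles (σ * μ), (-(mergeQ i q (cycMaxVal (σ * μ) (g ∘ cycleMk σ) c))) := by
          apply Finset.sum_congr rfl
          intro g _
          congr 1
          exact Finset.prod_congr rfl (fun b _ => by rw [hmin _ g b])
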